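/- Assume the standing hypothesis (H) and that Γ satisfies the Weak Hexagon Axiom (WHA). Let S be a symplecton and let p, q ∈ G_𝒜(S) be collinear points with p^⊥ ∩ S = {p₁} and q^⊥ ∩ S = {q₁}. Then p₁ and q₁ are collinear (q₁ ∈ p₁^⊥). -/

import Mathlib

/-! Preliminaries: point-line spaces, parapolar spaces, Grassmann spaces,
half-spin geometries, and the standing hypothesis (H). -/

universe u v

variable {P : Type u}

/-- Two points are collinear if they are distinct and lie on a common line. -/
def Collin (L : Set (Set P)) (p q : P) : Prop :=
  p ≠ q ∧ ∃ l ∈ L, p ∈ l ∧ q ∈ l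

/-- `perp L p` is the set of points collinear with `p`, together with `p` itself. -/
def perp (L : Set (Set P)) (p : P) : Set P :=
  {q | q = p ∨ Collin L p q}

/-- The collinearity graph of a point-line space. -/
def collGraph (L : Set (Set P)) : SimpleGraph P where
  Adj := Collin L
  symm := by
    constructor
    rintro p q ⟨hne, l, hl, hp, hq⟩
    exact ⟨hne.symm, l, hl, hq, hp⟩
  loopless := by
    constructor
    rintro p ⟨hne, -⟩
    exact hne rfl

/-- Distance in the collinearity graph. -/
noncomputable def gdist (L : Set (Set P)) (p q : P) : ℕ :=
  (collGraph L).dist p q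

/-- A subspace: every line meeting it in at least two points is contained in it. -/
def IsSubspace (L : Set (Set P)) (X : Set P) : Prop :=
  ∀ l ∈ L, (X ∩ l).Nontrivial → l ⊆ X

/-- A singular subspace: a subspace whose points are pairwise collinear. -/
def IsSingular (L : Set (Set P)) (X : Set P) : Prop :=
  IsSubspace L X ∧ ∀ p ∈ X, ∀ q ∈ X, p = q ∨ Collin L p q

/-- `2`-convexity: for any two of its points at distance 2, every point collinear
with both lies in the set. -/
def Is2Convex (L : Set (Set P)) (X : Set P) : Prop :=
  ∀ p ∈ X, ∀ q ∈ X, gdist L p q = 2 →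
    ∀ r, Collin L p r → Collin L q r → r ∈ X

/-- There is a strictly increasing chain of `n + 1` nonempty singular subspaces
ending at `X`. -/
def HasRankChain (L : Set (Set P)) (X : Set P) (n : ℕ) : Prop :=
  ∃ c : Fin (n + 1) → Set P, StrictMono c ∧
    (∀ i, (c i).Nonempty ∧ IsSingular L (c i)) ∧ c (Fin.last n) = X

/-- Projective rank of a singular subspace: length of the longest chain of distinct
nonempty singular subspaces ending at `X`. -/
def HasProjRank (L : Set (Set P)) (X : Set P) (n : ℕ) : Prop :=
  HasRankChain L X n ∧ ¬ HasRankChain L X (n + 1)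

/-- A plane is a (nonempty) singular subspace of projective rank 2. -/
def IsPlane (L : Set (Set P)) (π : Set P) : Prop :=
  π.Nonempty ∧ IsSingular L π ∧ HasProjRank L π 2

/-- A maximal singular subspace of the whole space. -/
def IsMaxSingular (L : Set (Set P)) (M : Set P) : Prop :=
  M.Nonempty ∧ IsSingular L M ∧ ∀ X, IsSingular L X → M ⊆ X → X = M

/-- A maximal singular subspace of the subspace `S`. -/
def IsMaxSingularIn (L : Set (Set P)) (S M : Set P) : Prop :=
  M.Nonempty ∧ M ⊆ S ∧ IsSingular L M ∧
    ∀ X, IsSingular L X → X ⊆ S → M ⊆ X → X = M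

/-- Partial linearity: two distinct points lie on at most one common line. -/
def IsPartialLinear (L : Set (Set P)) : Prop :=
  ∀ l₁ ∈ L, ∀ l₂ ∈ L, (l₁ ∩ l₂ : Set P).Nontrivial → l₁ = l₂

/-- A gamma space: a partial linear space in which `p^⊥ ∩ l` is empty, a point,
or all of `l`, for every point `p` and line `l`. -/
def IsGammaSpace (L : Set (Set P)) : Prop :=
  IsPartialLinear L ∧
    ∀ p : P, ∀ l ∈ L, perp L p ∩ l = ∅ ∨ (∃ q, perp L p ∩ l = {q}) ∨ l ⊆ perp L p

/-- The subset `S` is a nondegenerate polar space of rank `n` (with respect to the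
lines of the ambient space contained in it): the one-or-all axiom holds, no point of
`S` is collinear with all other points of `S`, and its maximal singular subspaces
have projective rank `n - 1`. -/
def IsPolarSpaceOfRank (L : Set (Set P)) (S : Set P) (n : ℕ) : Prop :=
  (∀ p ∈ S, ∀ l ∈ L, l ⊆ S → p ∉ l →
      (∃! q, q ∈ l ∧ Collin L p q) ∨ ∀ q ∈ l, Collin L p q) ∧
  (∀ p ∈ S, ∃ q ∈ S, q ≠ p ∧ ¬ Collin L p q) ∧
  (∀ M, IsMaxSingularIn L S M → HasProjRank L M (n - 1))

/-- A parapolar space with line set `L` and family of symplecta `S`. -/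
structure IsParapolar (L S : Set (Set P)) : Prop where
  line_nontrivial : ∀ l ∈ L, (l : Set P).Nontrivial
  gamma : IsGammaSpace L
  connected : (collGraph L).Connected
  symp_subspace : ∀ s ∈ S, IsSubspace L s
  symp_convex : ∀ s ∈ S, Is2Convex L s
  symp_polar : ∀ s ∈ S, ∃ n, 2 ≤ n ∧ IsPolarSpaceOfRank L s n
  line_in_symp : ∀ l ∈ L, ∃ s ∈ S, l ⊆ s
  quad_in_symp : ∀ p₁ p₂ p₃ p₄ : P,
    Collin L p₁ p₂ → Collin L p₂ p₃ → Collin L p₃ p₄ → Collin L p₄ p₁ →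
    ¬ Collin L p₁ p₃ → ¬ Collin L p₂ p₄ → p₁ ≠ p₃ → p₂ ≠ p₄ →
    ∃! s, s ∈ S ∧ p₁ ∈ s ∧ p₂ ∈ s ∧ p₃ ∈ s ∧ p₄ ∈ s

/-- A strong parapolar space: every pair of points at distance 2 lies in a symplecton. -/
def IsStrongParapolar (L S : Set (Set P)) : Prop :=
  IsParapolar L S ∧ ∀ p q : P, gdist L p q = 2 → ∃ s ∈ S, p ∈ s ∧ q ∈ s

/-- A polar pair: two points at distance 2 with at least two common neighbours. -/
def PolarPair (L : Set (Set P)) (p q : P) : Prop :=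
  gdist L p q = 2 ∧ (perp L p ∩ perp L q).Nontrivial

/-- An isomorphism of point-line spaces: a bijection of the point sets mapping
lines bijectively onto lines. -/
structure PLIso (P₁ : Type u) (L₁ : Set (Set P₁)) (P₂ : Type v) (L₂ : Set (Set P₂)) where
  toEquiv : P₁ ≃ P₂
  line_iff : ∀ s : Set P₁, s ∈ L₁ ↔ toEquiv '' s ∈ L₂

/-- Points of the residue of `p`: the lines through `p`. -/
def ResPoint (L : Set (Set P)) (p : P) : Type u := {l : Set P // l ∈ L ∧ p ∈ l}

/-- Lines of the residue of `p`: the pencils of lines through `p` inside a plane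
through `p`. -/
def ResLines (L : Set (Set P)) (p : P) : Set (Set (ResPoint L p)) :=
  {s | ∃ π : Set P, IsPlane L π ∧ p ∈ π ∧ s = {l : ResPoint L p | l.1 ⊆ π}}

section Grassmann

variable (K : Type*) (V : Type*) [DivisionRing K] [AddCommGroup V] [Module K V]

/-- Points of the Grassmann space `A_{7,4}(K)`: `4`-dimensional subspaces of `V`. -/
def GrassPoint : Type _ := {W : Submodule K V // Module.finrank K ↥W = 4}

/-- Lines of the Grassmann space `A_{7,4}(K)`: the sets `{W : U₃ < W < U₅}` for
flags `U₃ < U₅` of subspaces of dimensions 3 and 5. -/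
def GrassLines : Set (Set (GrassPoint K V)) :=
  {s | ∃ U₃ U₅ : Submodule K V, Module.finrank K ↥U₃ = 3 ∧ Module.finrank K ↥U₅ = 5 ∧
    U₃ < U₅ ∧ s = {W : GrassPoint K V | U₃ < W.1 ∧ W.1 < U₅}}

/-- The star of a 3-dimensional subspace `U`. -/
def GrassStar (U : Submodule K V) : Set (GrassPoint K V) := {W | U < W.1}

/-- The top of a 5-dimensional subspace `Y`. -/
def GrassTop (Y : Submodule K V) : Set (GrassPoint K V) := {W | W.1 < Y}

/-- The symplecton determined by a flag `U₂ < U₆`. -/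
def GrassSymp (U₂ U₆ : Submodule K V) : Set (GrassPoint K V) := {W | U₂ < W.1 ∧ W.1 < U₆}

/-- The family of symplecta of the Grassmann space `A_{7,4}(K)`. -/
def GrassSymps : Set (Set (GrassPoint K V)) :=
  {s | ∃ U₂ U₆ : Submodule K V, Module.finrank K ↥U₂ = 2 ∧ Module.finrank K ↥U₆ = 6 ∧
    U₂ < U₆ ∧ s = GrassSymp K V U₂ U₆}

end Grassmann

/-- The data of a Grassmann space `A_{7,4}(K)`: a division ring `K` and an
8-dimensional `K`-vector space. -/
structure A74Data : Type 1 where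
  K : Type
  V : Type
  [instK : DivisionRing K]
  [instV : AddCommGroup V]
  [instM : Module K V]
  dim8 : Module.finrank K V = 8

attribute [instance] A74Data.instK A74Data.instV A74Data.instM

/-- A point-line space is locally of type `A_{7,4}` if every point residue is
isomorphic to a Grassmann space `A_{7,4}(K)` for some division ring `K`. -/
def LocallyA74 (L : Set (Set P)) : Prop :=
  ∀ p : P, ∃ D : A74Data,
    Nonempty (PLIso (ResPoint L p) (ResLines L p) (GrassPoint D.K D.V) (GrassLines D.K D.V))

/-- The Weak Hexagon Axiom. -/
def WHA (L : Set (Set P)) : Prop :=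
  ∀ p : Fin 6 → P, Function.Injective p →
    (∀ i : Fin 6, Collin L (p i) (p (i + 1))) →
    (∀ i j : Fin 6, j ≠ i → j ≠ i + 1 → j ≠ i - 1 → ¬ Collin L (p i) (p j)) →
    PolarPair L (p 0) (p 2) →
    ∃ w, w ∈ perp L (p 0) ∧ w ∈ perp L (p 2) ∧ w ∈ perp L (p 4)

/-- The standing hypothesis (H): a parapolar space locally of type `A_{7,4}` whose
maximal singular subspaces (of rank 5) are partitioned into two families `A` and `B`
with the prescribed intersection behaviour, every plane lying in exactly one member
of each family, and whose symplecta are polar spaces of rank 4. -/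
structure HypH (P : Type u) where
  L : Set (Set P)
  S : Set (Set P)
  A : Set (Set P)
  B : Set (Set P)
  parapolar : IsParapolar L S
  locally74 : LocallyA74 L
  A_max : ∀ M ∈ A, IsMaxSingular L M
  B_max : ∀ M ∈ B, IsMaxSingular L M
  max_mem : ∀ M, IsMaxSingular L M → M ∈ A ∪ B
  AB_disj : Disjoint A B
  max_rank5 : ∀ M, IsMaxSingular L M → HasProjRank L M 5
  interAA : ∀ M₁ ∈ A, ∀ M₂ ∈ A, M₁ ≠ M₂ →
    M₁ ∩ M₂ = ∅ ∨ (∃ x, M₁ ∩ M₂ = {x}) ∨ M₁ ∩ M₂ ∈ L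
  interBB : ∀ M₁ ∈ B, ∀ M₂ ∈ B, M₁ ≠ M₂ →
    M₁ ∩ M₂ = ∅ ∨ (∃ x, M₁ ∩ M₂ = {x}) ∨ M₁ ∩ M₂ ∈ L
  interAB : ∀ M₁ ∈ A, ∀ M₂ ∈ B,
    M₁ ∩ M₂ = ∅ ∨ (∃ x, M₁ ∩ M₂ = {x}) ∨ IsPlane L (M₁ ∩ M₂)
  planeA : ∀ π, IsPlane L π → ∃! M, M ∈ A ∧ π ⊆ M
  planeB : ∀ π, IsPlane L π → ∃! M, M ∈ B ∧ π ⊆ M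
  symp_rank4 : ∀ s ∈ S, IsPolarSpaceOfRank L s 4

/-- `𝒳(S)`: members `M` of the family `X` for which `M ∩ S` is a maximal singular
subspace of `S`. -/
def famS (L X : Set (Set P)) (s : Set P) : Set (Set P) :=
  {M | M ∈ X ∧ IsMaxSingularIn L s (M ∩ s)}

/-- `M_𝒳(S) = {M ∩ S : M ∈ 𝒳(S)}`. -/
def MX (L X : Set (Set P)) (s : Set P) : Set (Set P) :=
  (fun M => M ∩ s) '' famS L X s

/-- `N_𝒳(S) = {p ∉ S : p^⊥ ∩ S ∈ M_𝒳(S)}`. -/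
def NX (L X : Set (Set P)) (s : Set P) : Set P :=
  {p | p ∉ s ∧ perp L p ∩ s ∈ MX L X s}

/-- `G_𝒳(S)`: points `p ∉ S` with `p^⊥ ∩ S = {q}` a single point, `{p, r}` polar
for every `r ∈ (q^⊥ ∩ S) \ {q}`, and `p^⊥ ∩ M` a plane for some `M ∈ 𝒳_q ∩ 𝒳(S)`. -/
def GX (L X : Set (Set P)) (s : Set P) : Set P :=
  {p | p ∉ s ∧ ∃ q, perp L p ∩ s = {q} ∧
    (∀ r ∈ perp L q ∩ s, r ≠ q → PolarPair L p r) ∧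
    ∃ M, M ∈ X ∧ q ∈ M ∧ M ∈ famS L X s ∧ IsPlane L (perp L p ∩ M)}

/-- `D_𝒳(S) = S ∪ N_𝒳(S) ∪ G_𝒳(S)`. -/
def DX (L X : Set (Set P)) (s : Set P) : Set P :=
  s ∪ NX L X s ∪ GX L X s

/-- Restriction of a family of sets of points to a subset `D` (viewed inside the
subtype `↥D`): the members of the family entirely contained in `D`. -/
def restrictFam (F : Set (Set P)) (D : Set P) : Set (Set ↥D) :=
  {l | ∃ l₀ ∈ F, l₀ ⊆ D ∧ l = Subtype.val ⁻¹' l₀}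

/-- A subspace of a quadratic space is totally singular if the form vanishes on it. -/
def TotallySingular {F : Type*} {V : Type*} [CommRing F] [AddCommGroup V] [Module F V]
    (Q : QuadraticForm F V) (W : Submodule F V) : Prop :=
  ∀ x ∈ W, Q x = 0

/-- The data of a half-spin geometry `D_{6,6}`: a field `F`, a 12-dimensional
`F`-vector space with a nondegenerate quadratic form of Witt index 6, together with
a chosen maximal totally singular subspace `W₀` determining one of the two classes. -/
structure HalfSpinData : Type 1 where
  F : Type
  V : Type
  [instF : Field F]
  [instV : AddCommGroup V]
  [instM : Module F V]
  Q : QuadraticForm F V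
  dim12 : Module.finrank F V = 12
  nondeg : LinearMap.BilinForm.Nondegenerate (QuadraticMap.polarBilin Q)
  witt_ex : ∃ W : Submodule F V, TotallySingular Q W ∧ Module.finrank F ↥W = 6
  witt_max : ∀ W : Submodule F V, TotallySingular Q W → Module.finrank F ↥W ≤ 6
  W₀ : Submodule F V
  W₀_sing : TotallySingular Q W₀
  W₀_dim : Module.finrank F ↥W₀ = 6

attribute [instance] HalfSpinData.instF HalfSpinData.instV HalfSpinData.instM

/-- Points of the half-spin geometry: totally singular 6-dimensional subspaces in
the class of `W₀` (same class iff the codimension of the intersection is even). -/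
def HalfSpinData.Points (D : HalfSpinData) : Type :=
  {W : Submodule D.F D.V // TotallySingular D.Q W ∧ Module.finrank D.F ↥W = 6 ∧
    Even (6 - Module.finrank D.F ↥(W ⊓ D.W₀))}

/-- Lines of the half-spin geometry: for each totally singular 3-dimensional
subspace `T`, the set of all points containing `T`. -/
def HalfSpinData.Lines (D : HalfSpinData) : Set (Set D.Points) :=
  {s | ∃ T : Submodule D.F D.V, TotallySingular D.Q T ∧ Module.finrank D.F ↥T = 3 ∧
    s = {W : D.Points | T ≤ W.1}}

/-- A point-line space is of type `D_{6,6}` if it is isomorphic to a half-spin geometry. -/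
def IsD66 (P' : Type v) (L' : Set (Set P')) : Prop :=
  ∃ D : HalfSpinData, Nonempty (PLIso P' L' D.Points D.Lines)
/-! ### Auxiliary lemmas for the proof of statement 10 -/

section Statement10Aux

private theorem collin_symm' {L : Set (Set P)} {a b : P} (h : Collin L a b) : Collin L b a := by
  obtain ⟨hne, l, hl, hp, hq⟩ := h
  exact ⟨hne.symm, l, hl, hq, hp⟩

private theorem collin_of_line' {L : Set (Set P)} {l : Set P} (hl : l ∈ L) {a b : P}
    (ha : a ∈ l) (hb : b ∈ l) (hab : a ≠ b) : Collin L a b :=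
  ⟨hab, l, hl, ha, hb⟩

private theorem line_sub' {L : Set (Set P)} {s l : Set P} (hs : IsSubspace L s) (hl : l ∈ L)
    {a b : P} (ha : a ∈ l) (hb : b ∈ l) (hab : a ≠ b) (has : a ∈ s) (hbs : b ∈ s) : l ⊆ s :=
  hs l hl ⟨a, ⟨has, ha⟩, b, ⟨hbs, hb⟩, hab⟩

/-- One-or-all axiom, convenient form: if `c ∈ s` is off the line `l ⊆ s` and some point of
`l` is not collinear with `c`, then there is a unique point of `l` collinear with `c`. -/
private theorem unique_perp' {L : Set (Set P)} {s : Set P} {n : ℕ}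
    (hpol : IsPolarSpaceOfRank L s n) {c : P} (hc : c ∈ s) {l : Set P} (hl : l ∈ L)
    (hls : l ⊆ s) (hcl : c ∉ l) {y : P} (hy : y ∈ l) (hny : ¬ Collin L c y) :
    ∃ u ∈ l, Collin L c u ∧ ∀ v ∈ l, Collin L c v → v = u := by
  rcases hpol.1 c hc l hl hls hcl with h | h
  · obtain ⟨u, ⟨hul, hcu⟩, huniq⟩ := h
    exact ⟨u, hul, hcu, fun v hv hcv => huniq v ⟨hv, hcv⟩⟩
  · exact absurd (h y hy) hny

/-- Every point of a symplecton lies in a maximal singular subspace of it (Zorn). -/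
private theorem exists_maxSingularIn' {L : Set (Set P)} {s : Set P} (hsub : IsSubspace L s)
    {a : P} (ha : a ∈ s) : ∃ M, IsMaxSingularIn L s M ∧ a ∈ M := by
  have hsingl : IsSingular L {a} := by
    constructor
    · rintro l hl ⟨x, ⟨hx1, -⟩, y, ⟨hy1, -⟩, hxy⟩
      exact absurd ((Set.mem_singleton_iff.1 hx1).trans (Set.mem_singleton_iff.1 hy1).symm) hxy
    · intro x hx y hy
      exact Or.inl ((Set.mem_singleton_iff.1 hx).trans (Set.mem_singleton_iff.1 hy).symm)
  have hzorn : ∀ c ⊆ {X : Set P | X ⊆ s ∧ a ∈ X ∧ IsSingular L X}, IsChain (· ⊆ ·) c →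
      c.Nonempty → ∃ ub ∈ {X : Set P | X ⊆ s ∧ a ∈ X ∧ IsSingular L X}, ∀ t ∈ c, t ⊆ ub := by
    intro c hcS hchain hcne
    obtain ⟨t₀, ht₀⟩ := hcne
    refine ⟨⋃₀ c, ⟨?_, ⟨t₀, ht₀, (hcS ht₀).2.1⟩, ?_, ?_⟩, fun t ht => Set.subset_sUnion_of_mem ht⟩
    · exact Set.sUnion_subset fun t ht => (hcS ht).1
    · rintro l hl ⟨x, ⟨hxU, hxl⟩, y, ⟨hyU, hyl⟩, hxy⟩
      obtain ⟨tx, htxc, hxtx⟩ := hxU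
      obtain ⟨ty, htyc, hyty⟩ := hyU
      rcases eq_or_ne tx ty with rfl | hne'
      · exact ((hcS htxc).2.2.1 l hl ⟨x, ⟨hxtx, hxl⟩, y, ⟨hyty, hyl⟩, hxy⟩).trans
          (Set.subset_sUnion_of_mem htxc)
      · rcases hchain htxc htyc hne' with hsub' | hsub'
        · exact ((hcS htyc).2.2.1 l hl ⟨x, ⟨hsub' hxtx, hxl⟩, y, ⟨hyty, hyl⟩, hxy⟩).trans
            (Set.subset_sUnion_of_mem htyc)
        · exact ((hcS htxc).2.2.1 l hl ⟨x, ⟨hxtx, hxl⟩, y, ⟨hsub' hyty, hyl⟩, hxy⟩).trans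
            (Set.subset_sUnion_of_mem htxc)
    · rintro x hxU y hyU
      obtain ⟨tx, htxc, hxtx⟩ := hxU
      obtain ⟨ty, htyc, hyty⟩ := hyU
      rcases eq_or_ne tx ty with rfl | hne'
      · exact (hcS htxc).2.2.2 x hxtx y hyty
      · rcases hchain htxc htyc hne' with hsub' | hsub'
        · exact (hcS htyc).2.2.2 x (hsub' hxtx) y hyty
        · exact (hcS htxc).2.2.2 x hxtx y (hsub' hyty)
  obtain ⟨M, haM, hMmax⟩ := zorn_subset_nonempty _ hzorn {a}
    ⟨Set.singleton_subset_iff.2 ha, rfl, hsingl⟩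
  have hMS := hMmax.1
  refine ⟨M, ⟨⟨a, hMS.2.1⟩, hMS.1, hMS.2.2, ?_⟩, hMS.2.1⟩
  intro X hXsing hXs hMX
  exact (hMmax.2 ⟨hXs, hMX hMS.2.1, hXsing⟩ hMX).antisymm hMX

/-- A rank-3 chain yields four distinct points. -/
private theorem four_points' {L : Set (Set P)} {M : Set P} (h : HasRankChain L M 3) :
    ∃ e₀ e₁ e₂ e₃, e₀ ∈ M ∧ e₁ ∈ M ∧ e₂ ∈ M ∧ e₃ ∈ M ∧
      e₀ ≠ e₁ ∧ e₀ ≠ e₂ ∧ e₀ ≠ e₃ ∧ e₁ ≠ e₂ ∧ e₁ ≠ e₃ ∧ e₂ ≠ e₃ := by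
  obtain ⟨c, hmono, hprop, hlast⟩ := h
  have h01 : c 0 < c 1 := hmono (by decide)
  have h12 : c 1 < c 2 := hmono (by decide)
  have h23 : c 2 < c (Fin.last 3) := hmono (by decide)
  have hsub01 : c 0 ⊆ c 1 := le_of_lt h01
  have hsub12 : c 1 ⊆ c 2 := le_of_lt h12
  have hsub23 : c 2 ⊆ c (Fin.last 3) := le_of_lt h23
  obtain ⟨e₀, he₀⟩ := (hprop 0).1
  obtain ⟨e₁, he₁c, he₁n⟩ := Set.exists_of_ssubset h01
  obtain ⟨e₂, he₂c, he₂n⟩ := Set.exists_of_ssubset h12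
  obtain ⟨e₃, he₃c, he₃n⟩ := Set.exists_of_ssubset h23
  have hM : ∀ x ∈ c (Fin.last 3), x ∈ M := fun x hx => hlast ▸ hx
  refine ⟨e₀, e₁, e₂, e₃, hM _ (hsub23 (hsub12 (hsub01 he₀))), hM _ (hsub23 (hsub12 he₁c)),
    hM _ (hsub23 he₂c), hM _ he₃c, ?_, ?_, ?_, ?_, ?_, ?_⟩
  · exact fun h => he₁n (h ▸ he₀)
  · exact fun h => he₂n (h ▸ hsub01 he₀)
  · exact fun h => he₃n (h ▸ hsub12 (hsub01 he₀))
  · exact fun h => he₂n (h ▸ he₁c)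
  · exact fun h => he₃n (h ▸ hsub12 he₁c)
  · exact fun h => he₃n (h ▸ he₂c)

end Statement10Aux
section Statement10Aux2

/-- Every line of a Grassmann space `A_{7,4}(K)` contains at least three points. -/
private theorem grass_line_three (D : A74Data) {s' : Set (GrassPoint D.K D.V)}
    (hs' : s' ∈ GrassLines D.K D.V) :
    ∃ W₁ W₂ W₃ : GrassPoint D.K D.V, W₁ ∈ s' ∧ W₂ ∈ s' ∧ W₃ ∈ s' ∧
      W₁ ≠ W₂ ∧ W₁ ≠ W₃ ∧ W₂ ≠ W₃ := by
  classical
  obtain ⟨U₃, U₅, h3, h5, hlt, rfl⟩ := hs'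
  haveI : FiniteDimensional D.K D.V :=
    FiniteDimensional.of_finrank_pos (by rw [D.dim8]; omega)
  obtain ⟨v₁, hv₁5, hv₁3⟩ := SetLike.exists_of_lt hlt
  have key : ∀ v : D.V, v ∈ U₅ → v ∉ U₃ →
      Module.finrank D.K ↥(U₃ ⊔ Submodule.span D.K {v}) = 4 ∧
      U₃ < U₃ ⊔ Submodule.span D.K {v} ∧ U₃ ⊔ Submodule.span D.K {v} < U₅ := by
    intro v hv5 hv3
    have hv0 : v ≠ 0 := fun h => hv3 (h ▸ U₃.zero_mem)
    have hinf : U₃ ⊓ Submodule.span D.K {v} = ⊥ := by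
      rw [eq_bot_iff]
      rintro x hx
      obtain ⟨hx3, hxs⟩ := Submodule.mem_inf.1 hx
      obtain ⟨cc, rfl⟩ := Submodule.mem_span_singleton.1 hxs
      rcases eq_or_ne cc 0 with rfl | hcc
      · simp
      · exfalso
        apply hv3
        have hmem : cc⁻¹ • (cc • v) ∈ U₃ := U₃.smul_mem _ hx3
        rwa [smul_smul, inv_mul_cancel₀ hcc, one_smul] at hmem
    have hsum := Submodule.finrank_sup_add_finrank_inf_eq U₃ (Submodule.span D.K {v})
    rw [hinf, h3, finrank_span_singleton hv0, finrank_bot] at hsum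
    have hrk : Module.finrank D.K ↥(U₃ ⊔ Submodule.span D.K {v}) = 4 := by omega
    refine ⟨hrk, ?_, ?_⟩
    · refine lt_of_le_of_ne le_sup_left (fun h => hv3 ?_)
      have hmem : v ∈ U₃ ⊔ Submodule.span D.K {v} :=
        Submodule.mem_sup_right (Submodule.mem_span_singleton_self v)
      rwa [← h] at hmem
    · refine lt_of_le_of_ne (sup_le hlt.le ?_) (fun h => ?_)
      · rwa [Submodule.span_le, Set.singleton_subset_iff]
      · rw [h, h5] at hrk
        omega
  obtain ⟨hrk₁, hlt₁₃, hlt₁₅⟩ := key v₁ hv₁5 hv₁3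
  obtain ⟨v₂, hv₂5, hv₂W₁⟩ := SetLike.exists_of_lt hlt₁₅
  have hv₂3 : v₂ ∉ U₃ := fun h => hv₂W₁ (Submodule.mem_sup_left h)
  have hv₁W₁ : v₁ ∈ U₃ ⊔ Submodule.span D.K {v₁} :=
    Submodule.mem_sup_right (Submodule.mem_span_singleton_self v₁)
  have hv₁₂5 : v₁ + v₂ ∈ U₅ := U₅.add_mem hv₁5 hv₂5
  have hv₁₂3 : v₁ + v₂ ∉ U₃ := by
    intro h
    have h2 : v₂ = (v₁ + v₂) - v₁ := by abel
    exact hv₂W₁ (by rw [h2]; exact Submodule.sub_mem _ (Submodule.mem_sup_left h) hv₁W₁)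
  obtain ⟨hrk₂, hlt₂₃, hlt₂₅⟩ := key v₂ hv₂5 hv₂3
  obtain ⟨hrk₃, hlt₃₃, hlt₃₅⟩ := key (v₁ + v₂) hv₁₂5 hv₁₂3
  refine ⟨⟨_, hrk₁⟩, ⟨_, hrk₂⟩, ⟨_, hrk₃⟩, ⟨hlt₁₃, hlt₁₅⟩, ⟨hlt₂₃, hlt₂₅⟩, ⟨hlt₃₃, hlt₃₅⟩,
    ?_, ?_, ?_⟩
  · intro h
    have h' : U₃ ⊔ Submodule.span D.K {v₁} = U₃ ⊔ Submodule.span D.K {v₂} :=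
      congrArg Subtype.val h
    exact hv₂W₁ (by rw [h']; exact Submodule.mem_sup_right (Submodule.mem_span_singleton_self v₂))
  · intro h
    have h' : U₃ ⊔ Submodule.span D.K {v₁} = U₃ ⊔ Submodule.span D.K {v₁ + v₂} :=
      congrArg Subtype.val h
    have hmem : v₁ + v₂ ∈ U₃ ⊔ Submodule.span D.K {v₁} := by
      rw [h']; exact Submodule.mem_sup_right (Submodule.mem_span_singleton_self _)
    have h2 : v₂ = (v₁ + v₂) - v₁ := by abel
    exact hv₂W₁ (by rw [h2]; exact Submodule.sub_mem _ hmem hv₁W₁)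
  · intro h
    have h' : U₃ ⊔ Submodule.span D.K {v₂} = U₃ ⊔ Submodule.span D.K {v₁ + v₂} :=
      congrArg Subtype.val h
    have hmem : v₁ + v₂ ∈ U₃ ⊔ Submodule.span D.K {v₂} := by
      rw [h']; exact Submodule.mem_sup_right (Submodule.mem_span_singleton_self _)
    obtain ⟨u, hu, z, hz, huz⟩ := Submodule.mem_sup.1 hmem
    obtain ⟨cc, rfl⟩ := Submodule.mem_span_singleton.1 hz
    have hdiff : (cc - 1) • v₂ = v₁ - u := by
      rw [sub_smul, one_smul]
      have : u + cc • v₂ = v₁ + v₂ := huz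
      have h4 : cc • v₂ = v₁ + v₂ - u := by rw [← this]; abel
      rw [h4]; abel
    rcases eq_or_ne cc 1 with rfl | hcc
    · have : (0 : D.V) = v₁ - u := by rw [← hdiff, sub_self, zero_smul]
      have hv₁u : v₁ = u := by
        have := sub_eq_zero.1 this.symm
        exact this
      exact hv₁3 (hv₁u ▸ hu)
    · have hv₂eq : v₂ = (cc - 1)⁻¹ • (v₁ - u) := by
        rw [← hdiff, smul_smul, inv_mul_cancel₀ (sub_ne_zero.2 hcc), one_smul]
      have : v₂ ∈ U₃ ⊔ Submodule.span D.K {v₁} := by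
        rw [hv₂eq]
        exact Submodule.smul_mem _ _ (Submodule.sub_mem _ hv₁W₁ (Submodule.mem_sup_left hu))
      exact hv₂W₁ this

/-- In a space locally `A_{7,4}`, any plane contains at least three lines through
each of its points. -/
private theorem pencil_three' {L : Set (Set P)} (h74 : LocallyA74 L) {x : P} {π : Set P}
    (hπ : IsPlane L π) (hx : x ∈ π) :
    ∃ l₁ l₂ l₃ : Set P, (l₁ ∈ L ∧ x ∈ l₁ ∧ l₁ ⊆ π) ∧ (l₂ ∈ L ∧ x ∈ l₂ ∧ l₂ ⊆ π) ∧
      (l₃ ∈ L ∧ x ∈ l₃ ∧ l₃ ⊆ π) ∧ l₁ ≠ l₂ ∧ l₁ ≠ l₃ ∧ l₂ ≠ l₃ := by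
  obtain ⟨D, ⟨φ⟩⟩ := h74 x
  have hmem : {l : ResPoint L x | l.1 ⊆ π} ∈ ResLines L x := ⟨π, hπ, hx, rfl⟩
  have himg := (φ.line_iff _).1 hmem
  obtain ⟨W₁, W₂, W₃, hW₁, hW₂, hW₃, h12, h13, h23⟩ := grass_line_three D himg
  obtain ⟨r₁, hr₁, he₁⟩ := hW₁
  obtain ⟨r₂, hr₂, he₂⟩ := hW₂
  obtain ⟨r₃, hr₃, he₃⟩ := hW₃
  refine ⟨r₁.1, r₂.1, r₃.1, ⟨r₁.2.1, r₁.2.2, hr₁⟩, ⟨r₂.2.1, r₂.2.2, hr₂⟩,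
    ⟨r₃.2.1, r₃.2.2, hr₃⟩, ?_, ?_, ?_⟩
  · intro hh
    exact h12 (by rw [← he₁, ← he₂]; exact congrArg φ.toEquiv (Subtype.ext hh))
  · intro hh
    exact h13 (by rw [← he₁, ← he₃]; exact congrArg φ.toEquiv (Subtype.ext hh))
  · intro hh
    exact h23 (by rw [← he₂, ← he₃]; exact congrArg φ.toEquiv (Subtype.ext hh))

end Statement10Aux2
section Statement10Aux3

/-- Through every point of a symplecton there is a line of the symplecton with at
least three points. -/
private theorem thick_line_of_symp (H : HypH P) {s : Set P} (hs : s ∈ H.S) {a : P}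
    (ha : a ∈ s) :
    ∃ l ∈ H.L, l ⊆ s ∧ a ∈ l ∧ ∃ y ∈ l, ∃ z ∈ l, y ≠ a ∧ z ≠ a ∧ y ≠ z := by
  by_contra hcon
  have hthin : ∀ l ∈ H.L, l ⊆ s → a ∈ l → ∀ y ∈ l, ∀ z ∈ l, y ≠ a → z ≠ a → y = z := by
    intro l hl hls hal y hy z hz hya hza
    by_contra hyz
    exact hcon ⟨l, hl, hls, hal, y, hy, z, hz, hya, hza, hyz⟩
  have hssub : IsSubspace H.L s := H.parapolar.symp_subspace s hs
  obtain ⟨M, hM, haM⟩ := exists_maxSingularIn' hssub ha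
  have hMrank : HasProjRank H.L M 3 := (H.symp_rank4 s hs).2.2 M hM
  obtain ⟨e₀, e₁, e₂, e₃, he₀, he₁, he₂, he₃, d01, d02, d03, d12, d13, d23⟩ :=
    four_points' hMrank.1
  obtain ⟨x₁, x₂, hx₁M, hx₂M, hx₁a, hx₂a, hx₁₂⟩ :
      ∃ x₁ x₂, x₁ ∈ M ∧ x₂ ∈ M ∧ x₁ ≠ a ∧ x₂ ≠ a ∧ x₁ ≠ x₂ := by
    by_cases h0 : e₀ = a
    · exact ⟨e₁, e₂, he₁, he₂, fun h => d01 (h0.symm ▸ h.symm ▸ rfl),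
        fun h => d02 (h0.symm ▸ h.symm ▸ rfl), d12⟩
    · by_cases h1 : e₁ = a
      · exact ⟨e₀, e₂, he₀, he₂, h0, fun h => d12 (h1.symm ▸ h.symm ▸ rfl), d02⟩
      · exact ⟨e₀, e₁, he₀, he₁, h0, h1, d01⟩
  have hMs : M ⊆ s := hM.2.1
  have hMsing : IsSingular H.L M := hM.2.2.1
  have hcx : Collin H.L x₁ x₂ := (hMsing.2 x₁ hx₁M x₂ hx₂M).resolve_left hx₁₂
  obtain ⟨-, l, hlL, hx₁l, hx₂l⟩ := hcx
  have hls : l ⊆ s := line_sub' hssub hlL hx₁l hx₂l hx₁₂ (hMs hx₁M) (hMs hx₂M)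
  have hlM : l ⊆ M := hMsing.1 l hlL ⟨x₁, ⟨hx₁M, hx₁l⟩, x₂, ⟨hx₂M, hx₂l⟩, hx₁₂⟩
  have hal : a ∉ l := fun h => hx₁₂ (hthin l hlL hls h x₁ hx₁l x₂ hx₂l hx₁a hx₂a)
  have hcal : ∀ y ∈ l, Collin H.L a y := fun y hy =>
    (hMsing.2 a haM y (hlM hy)).resolve_left (fun h => hal (h ▸ hy))
  have hπs : insert a l ⊆ s := Set.insert_subset_iff.mpr ⟨ha, hls⟩
  have hx₁π : x₁ ∈ insert a l := Set.mem_insert_of_mem _ hx₁l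
  have haπ : a ∈ insert a l := Set.mem_insert _ _
  -- `insert a l` is a subspace
  have hπsub : IsSubspace H.L (insert a l) := by
    have key : ∀ u v : P, u ∈ insert a l → v ∈ insert a l → ∀ l'' ∈ H.L,
        u ∈ l'' → v ∈ l'' → u ≠ v → u = a → l'' ⊆ insert a l := by
      intro u v huπ hvπ l'' hl'' hul hvl huv hua
      have hvl' : v ∈ l := by
        rcases Set.mem_insert_iff.1 hvπ with h | h
        · exact absurd (hua.trans h.symm) huv
        · exact h
      have hva : v ≠ a := fun h => huv (hua.trans h.symm)
      have hl''s : l'' ⊆ s := line_sub' hssub hl'' hul hvl huv (hua ▸ ha) (hls hvl')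
      intro w hw
      rcases eq_or_ne w a with rfl | hwa
      · exact haπ
      · have hwv := hthin l'' hl'' hl''s (hua ▸ hul) w hw v hvl hwa hva
        exact Set.mem_insert_of_mem _ (by rw [hwv]; exact hvl')
    rintro l'' hl'' ⟨u, ⟨huπ, hul⟩, v, ⟨hvπ, hvl⟩, huv⟩
    rcases eq_or_ne u a with hua | hua
    · exact key u v huπ hvπ l'' hl'' hul hvl huv hua
    rcases eq_or_ne v a with hva | hva
    · exact key v u hvπ huπ l'' hl'' hvl hul huv.symm hva
    · have hul' : u ∈ l := (Set.mem_insert_iff.1 huπ).resolve_left hua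
      have hvl' : v ∈ l := (Set.mem_insert_iff.1 hvπ).resolve_left hva
      have heq : l'' = l :=
        H.parapolar.gamma.1 l'' hl'' l hlL ⟨u, ⟨hul, hul'⟩, v, ⟨hvl, hvl'⟩, huv⟩
      rw [heq]
      exact Set.subset_insert _ _
  have hπsing : IsSingular H.L (insert a l) := by
    refine ⟨hπsub, ?_⟩
    rintro u huπ v hvπ
    rcases Set.mem_insert_iff.1 huπ with rfl | hul'
    · rcases Set.mem_insert_iff.1 hvπ with rfl | hvl'
      · exact Or.inl rfl
      · exact Or.inr (hcal v hvl')
    · rcases Set.mem_insert_iff.1 hvπ with rfl | hvl'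
      · exact Or.inr (collin_symm' (hcal u hul'))
      · rcases eq_or_ne u v with h | h
        · exact Or.inl h
        · exact Or.inr (collin_of_line' hlL hul' hvl' h)
  have hsing_single : ∀ w : P, IsSingular H.L {w} := by
    intro w
    constructor
    · rintro l' hl' ⟨u, ⟨hu, -⟩, v, ⟨hv, -⟩, huv⟩
      exact absurd ((Set.mem_singleton_iff.1 hu).trans (Set.mem_singleton_iff.1 hv).symm) huv
    · intro u hu v hv
      exact Or.inl ((Set.mem_singleton_iff.1 hu).trans (Set.mem_singleton_iff.1 hv).symm)
  have hsing_l : IsSingular H.L l := by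
    constructor
    · intro l' hl' hnt
      obtain ⟨u, ⟨hul, hul'⟩, v, ⟨hvl, hvl'⟩, huv⟩ := hnt
      rw [H.parapolar.gamma.1 l' hl' l hlL ⟨u, ⟨hul', hul⟩, v, ⟨hvl', hvl⟩, huv⟩]
    · intro u hu v hv
      rcases eq_or_ne u v with h | h
      · exact Or.inl h
      · exact Or.inr (collin_of_line' hlL hu hv h)
  have hlt1 : ({x₁} : Set P) < l := by
    refine lt_of_le_of_ne (Set.singleton_subset_iff.2 hx₁l) (fun h => hx₁₂ ?_)
    rw [← h] at hx₂l
    exact (Set.mem_singleton_iff.1 hx₂l).symm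
  have hlt2 : l < insert a l := by
    refine lt_of_le_of_ne (Set.subset_insert _ _) (fun h => hal ?_)
    rw [h]
    exact haπ
  have hplane : IsPlane H.L (insert a l) := by
    refine ⟨⟨a, haπ⟩, hπsing, ⟨?_, ?_⟩⟩
    · refine ⟨fun i => if i.val = 0 then {x₁} else if i.val = 1 then l else insert a l,
        ?_, ?_, rfl⟩
      · intro i j hij
        fin_cases i <;> fin_cases j <;>
          first
          | exact absurd hij (by decide)
          | exact hlt1
          | exact hlt2
          | exact lt_trans hlt1 hlt2
      · intro i
        fin_cases i
        · exact ⟨⟨x₁, rfl⟩, hsing_single x₁⟩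
        · exact ⟨⟨x₁, hx₁l⟩, hsing_l⟩
        · exact ⟨⟨a, haπ⟩, hπsing⟩
    · rintro ⟨c, hmono, hprop, hlast⟩
      have h23' : c 2 < insert a l := by
        have := hmono (show (2 : Fin 4) < Fin.last 3 by decide)
        rwa [hlast] at this
      have h12' : c 1 < c 2 := hmono (by decide)
      have h01' : c 0 < c 1 := hmono (by decide)
      have hXsub : IsSubspace H.L (c 2) := (hprop 2).2.1
      have hXπ : c 2 ⊆ insert a l := le_of_lt h23'
      by_cases hlX : l ⊆ c 2
      · by_cases haX : a ∈ c 2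
        · exact h23'.ne (le_antisymm (le_of_lt h23') (Set.insert_subset_iff.mpr ⟨haX, hlX⟩))
        · have hXl : c 2 = l := by
            apply Set.Subset.antisymm _ hlX
            intro w hw
            rcases Set.mem_insert_iff.1 (hXπ hw) with rfl | h
            · exact absurd hw haX
            · exact h
          obtain ⟨x0, hx0⟩ := (hprop 0).1
          have hx0c1 : x0 ∈ c 1 := le_of_lt h01' hx0
          obtain ⟨y1, hy1c, hy1n⟩ := Set.exists_of_ssubset h01'
          have hx0l : x0 ∈ l := by rw [← hXl]; exact le_of_lt h12' hx0c1
          have hy1l : y1 ∈ l := by rw [← hXl]; exact le_of_lt h12' hy1c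
          have h2 : l ⊆ c 1 := (hprop 1).2.1 l hlL
            ⟨x0, ⟨hx0c1, hx0l⟩, y1, ⟨hy1c, hy1l⟩, fun h => hy1n (h ▸ hx0)⟩
          exact h12'.2 (by rw [hXl]; exact h2)
      · have hsmall : ∀ x y z : P, x ∈ c 2 → y ∈ c 2 → z ∈ c 2 →
            x ≠ y → x ≠ z → y ≠ z → False := by
          intro x y z hx hy hz hxy hxz hyz
          have hmem : ∀ w ∈ c 2, w = a ∨ w ∈ l := fun w hw => Set.mem_insert_iff.1 (hXπ hw)
          have hpair : ∀ u v : P, u ∈ c 2 → v ∈ c 2 → u ≠ v → u ∈ l → v ∈ l → False := by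
            intro u v hu hv huv hul hvl
            exact hlX (hXsub l hlL ⟨u, ⟨hu, hul⟩, v, ⟨hv, hvl⟩, huv⟩)
          rcases hmem x hx with rfl | hxl
          · rcases hmem y hy with rfl | hyl
            · exact hxy rfl
            · rcases hmem z hz with rfl | hzl
              · exact hxz rfl
              · exact hpair y z hy hz hyz hyl hzl
          · rcases hmem y hy with rfl | hyl
            · rcases hmem z hz with rfl | hzl
              · exact hyz rfl
              · exact hpair x z hx hz hxz hxl hzl
            · exact hpair x y hx hy hxy hxl hyl
        obtain ⟨x0, hx0⟩ := (hprop 0).1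
        obtain ⟨y1, hy1c, hy1n⟩ := Set.exists_of_ssubset h01'
        obtain ⟨z2, hz2c, hz2n⟩ := Set.exists_of_ssubset h12'
        have hx0X : x0 ∈ c 2 := le_of_lt h12' (le_of_lt h01' hx0)
        have hy1X : y1 ∈ c 2 := le_of_lt h12' hy1c
        exact hsmall x0 y1 z2 hx0X hy1X hz2c (fun h => hy1n (h ▸ hx0))
          (fun h => hz2n (h ▸ le_of_lt h01' hx0)) (fun h => hz2n (h ▸ hy1c))
  obtain ⟨l₁, l₂, l₃, ⟨h1L, h1x, h1π⟩, ⟨h2L, h2x, h2π⟩, ⟨h3L, h3x, h3π⟩, d12', d13', d23'⟩ :=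
    pencil_three' H.locally74 hplane hx₁π
  have hclass : ∀ l' : Set P, l' ∈ H.L → x₁ ∈ l' → l' ⊆ insert a l →
      l' = {a, x₁} ∨ l' = l := by
    intro l' hl' hx₁l' hl'π
    by_cases hal' : a ∈ l'
    · left
      have hl's : l' ⊆ s := hl'π.trans hπs
      ext w
      constructor
      · intro hw
        rcases eq_or_ne w a with rfl | hwa
        · exact Set.mem_insert _ _
        · have hwx := hthin l' hl' hl's hal' w hw x₁ hx₁l' hwa hx₁a
          rw [hwx]
          exact Set.mem_insert_of_mem _ rfl
      · intro hw
        rcases hw with rfl | hw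
        · exact hal'
        · rwa [Set.mem_singleton_iff.1 hw]
    · right
      have hl'l : l' ⊆ l := by
        intro w hw
        rcases Set.mem_insert_iff.1 (hl'π hw) with rfl | h
        · exact absurd hw hal'
        · exact h
      obtain ⟨u, hu, v, hv, huv⟩ := H.parapolar.line_nontrivial l' hl'
      exact H.parapolar.gamma.1 l' hl' l hlL ⟨u, ⟨hu, hl'l hu⟩, v, ⟨hv, hl'l hv⟩, huv⟩
  rcases hclass l₁ h1L h1x h1π with e1 | e1 <;>
    rcases hclass l₂ h2L h2x h2π with e2 | e2 <;>
      rcases hclass l₃ h3L h3x h3π with e3 | e3 <;>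
        first
        | exact d12' (e1.trans e2.symm)
        | exact d13' (e1.trans e3.symm)
        | exact d23' (e2.trans e3.symm)

end Statement10Aux3
section Statement10Aux4

/-- In a symplecton, if `p₁ ⌣̸ q₁` and `w` is a common neighbour, then there is a
common neighbour of `p₁, q₁` not collinear with `w`. -/
private theorem exists_far_perp {L : Set (Set P)} {s : Set P} {n : ℕ}
    (hpol : IsPolarSpaceOfRank L s n) (hsub : IsSubspace L s)
    {p₁ q₁ w : P} (hp₁ : p₁ ∈ s) (hq₁ : q₁ ∈ s) (hw : w ∈ s)
    (hne : p₁ ≠ q₁) (hnc : ¬ Collin L p₁ q₁)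
    (hcpw : Collin L p₁ w) (hcqw : Collin L q₁ w) :
    ∃ w' ∈ s, Collin L p₁ w' ∧ Collin L q₁ w' ∧ ¬ Collin L w w' ∧ w' ≠ w := by
  by_contra hcontra
  have hcon : ∀ w' ∈ s, Collin L p₁ w' → Collin L q₁ w' → ¬ Collin L w w' → w' = w := by
    intro w' hw' h1 h2 h3
    by_contra hne'
    exact hcontra ⟨w', hw', h1, h2, h3, hne'⟩
  have hnc' : ¬ Collin L q₁ p₁ := fun h => hnc (collin_symm' h)
  have hwp : Collin L w p₁ := collin_symm' hcpw
  have hwq : Collin L w q₁ := collin_symm' hcqw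
  -- case β : a point collinear with p₁ but not with q₁ nor w leads to a contradiction
  have hβ : ∀ y ∈ s, Collin L p₁ y → ¬ Collin L q₁ y → ¬ Collin L w y → y ≠ w → False := by
    intro y hys hcpy hncqy hncwy hyw
    obtain ⟨hpy_ne, m₁, hm₁L, hp₁m, hym⟩ := hcpy
    have hcpy' : Collin L p₁ y := ⟨hpy_ne, m₁, hm₁L, hp₁m, hym⟩
    have hm₁s : m₁ ⊆ s := hsub m₁ hm₁L ⟨p₁, ⟨hp₁, hp₁m⟩, y, ⟨hys, hym⟩, hpy_ne⟩
    have hq₁m : q₁ ∉ m₁ := fun h => hnc' (collin_of_line' hm₁L h hp₁m (Ne.symm hne))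
    obtain ⟨u, hum, hcqu, huniq⟩ := unique_perp' hpol hq₁ hm₁L hm₁s hq₁m hp₁m hnc'
    have hup : u ≠ p₁ := fun h => hnc' (h ▸ hcqu)
    have hcpu : Collin L p₁ u := collin_of_line' hm₁L hp₁m hum (Ne.symm hup)
    have hwm : w ∉ m₁ := fun h => hncwy (collin_of_line' hm₁L h hym (Ne.symm hyw))
    by_cases hcwu : Collin L w u
    · obtain ⟨u', hu'm, hcwu', huniq'⟩ := unique_perp' hpol hw hm₁L hm₁s hwm hym hncwy
      exact hup ((huniq' u hum hcwu).trans (huniq' p₁ hp₁m hwp).symm)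
    · have huw := hcon u (hm₁s hum) hcpu hcqu hcwu
      rw [huw] at hum
      exact hncwy (collin_of_line' hm₁L hum hym (Ne.symm hyw))
  -- case γ : symmetric with the roles of p₁ and q₁ interchanged
  have hγ : ∀ y ∈ s, Collin L q₁ y → ¬ Collin L p₁ y → ¬ Collin L w y → y ≠ w → False := by
    intro y hys hcqy hncpy hncwy hyw
    obtain ⟨hqy_ne, m₂, hm₂L, hq₁m, hym⟩ := hcqy
    have hm₂s : m₂ ⊆ s := hsub m₂ hm₂L ⟨q₁, ⟨hq₁, hq₁m⟩, y, ⟨hys, hym⟩, hqy_ne⟩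
    have hp₁m : p₁ ∉ m₂ := fun h => hnc (collin_of_line' hm₂L h hq₁m hne)
    obtain ⟨u, hum, hcpu, huniq⟩ := unique_perp' hpol hp₁ hm₂L hm₂s hp₁m hq₁m hnc
    have huq : u ≠ q₁ := fun h => hnc (h ▸ hcpu)
    have hcqu : Collin L q₁ u := collin_of_line' hm₂L hq₁m hum (Ne.symm huq)
    have hwm : w ∉ m₂ := fun h => hncwy (collin_of_line' hm₂L h hym (Ne.symm hyw))
    by_cases hcwu : Collin L w u
    · obtain ⟨u', hu'm, hcwu', huniq'⟩ := unique_perp' hpol hw hm₂L hm₂s hwm hym hncwy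
      exact huq ((huniq' u hum hcwu).trans (huniq' q₁ hq₁m hwq).symm)
    · have huw := hcon u (hm₂s hum) hcpu hcqu hcwu
      rw [huw] at hum
      exact hncwy (collin_of_line' hm₂L hum hym (Ne.symm hyw))
  -- nondegeneracy at w
  obtain ⟨t, hts, htw, hncwt⟩ := hpol.2.1 w hw
  have hnctw : ¬ Collin L t w := fun h => hncwt (collin_symm' h)
  have htp₁ : t ≠ p₁ := fun h => hncwt (h ▸ hwp)
  have htq₁ : t ≠ q₁ := fun h => hncwt (h ▸ hwq)
  by_cases hcpt : Collin L p₁ t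
  · by_cases hcqt : Collin L q₁ t
    · exact htw (hcon t hts hcpt hcqt hncwt)
    · exact hβ t hts hcpt hcqt hncwt htw
  · by_cases hcqt : Collin L q₁ t
    · exact hγ t hts hcqt hcpt hncwt htw
    · -- case δ
      obtain ⟨hqw_ne, m₃, hm₃L, hq₁m₃, hwm₃⟩ := hcqw
      have hm₃s : m₃ ⊆ s := hsub m₃ hm₃L ⟨q₁, ⟨hq₁, hq₁m₃⟩, w, ⟨hw, hwm₃⟩, hqw_ne⟩
      have htm₃ : t ∉ m₃ := by
        intro h
        rcases eq_or_ne t w with h' | h'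
        · exact htw h'
        · exact hncwt (collin_of_line' hm₃L hwm₃ h (Ne.symm h'))
      obtain ⟨zb, hzbm, hctzb, huniqt⟩ := unique_perp' hpol hts hm₃L hm₃s htm₃ hwm₃ hnctw
      have hzbq : zb ≠ q₁ := fun h => hcqt (collin_symm' (h ▸ hctzb))
      have hzbw : zb ≠ w := fun h => hnctw (h ▸ hctzb)
      have hcqzb : Collin L q₁ zb := collin_of_line' hm₃L hq₁m₃ hzbm (Ne.symm hzbq)
      have hcwzb : Collin L w zb := collin_of_line' hm₃L hwm₃ hzbm (Ne.symm hzbw)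
      have hp₁m₃ : p₁ ∉ m₃ := fun h => hnc (collin_of_line' hm₃L h hq₁m₃ hne)
      obtain ⟨v, hvm, hcpv, huniqp⟩ := unique_perp' hpol hp₁ hm₃L hm₃s hp₁m₃ hq₁m₃ hnc
      have hvw : v = w := (huniqp w hwm₃ hcpw).symm
      have hncpzb : ¬ Collin L p₁ zb := fun h => hzbw ((huniqp zb hzbm h).trans hvw)
      obtain ⟨htzb_ne, m₄, hm₄L, htm₄, hzbm₄⟩ := hctzb
      have hm₄s : m₄ ⊆ s := hsub m₄ hm₄L ⟨t, ⟨hts, htm₄⟩, zb, ⟨hm₃s hzbm, hzbm₄⟩, htzb_ne⟩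
      have hp₁m₄ : p₁ ∉ m₄ := fun h => hcpt (collin_of_line' hm₄L h htm₄ (Ne.symm htp₁))
      obtain ⟨u₇, hu₇m, hcpu₇, huniq₇⟩ :=
        unique_perp' hpol hp₁ hm₄L hm₄s hp₁m₄ hzbm₄ hncpzb
      have hwm₄ : w ∉ m₄ := fun h => hncwt (collin_of_line' hm₄L h htm₄ (Ne.symm htw))
      obtain ⟨v', hv'm, hcwv', huniqw⟩ := unique_perp' hpol hw hm₄L hm₄s hwm₄ htm₄ hncwt
      have hncwu₇ : ¬ Collin L w u₇ := by
        intro h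
        have h1 : u₇ = v' := huniqw u₇ hu₇m h
        have h2 : zb = v' := huniqw zb hzbm₄ hcwzb
        exact hncpzb ((h1.trans h2.symm) ▸ hcpu₇)
      have hu₇w : u₇ ≠ w := fun h => hwm₄ (h ▸ hu₇m)
      have hncqu₇ : ¬ Collin L q₁ u₇ := fun h =>
        hu₇w (hcon u₇ (hm₄s hu₇m) hcpu₇ h hncwu₇)
      exact hβ u₇ (hm₄s hu₇m) hcpu₇ hncqu₇ hncwu₇ hu₇w

end Statement10Aux4
/-- The hexagon indexing function used in the proof of statement 10. -/
@[reducible] private def hexFun (a b c d e f : P) : Fin 6 → P := fun i =>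
  if i.val = 0 then a else if i.val = 1 then b else if i.val = 2 then c
  else if i.val = 3 then d else if i.val = 4 then e else f
/-- claim in Lemma 4.10: if `p, q ∈ G_𝒜(S)` are collinear with
`p^⊥ ∩ S = {p₁}` and `q^⊥ ∩ S = {q₁}`, then `q₁ ∈ p₁^⊥`. -/
theorem statement_10 {P : Type u} (H : HypH P) (hWHA : WHA H.L)
    (s : Set P) (hs : s ∈ H.S)
    (p q p₁ q₁ : P) (hp : p ∈ GX H.L H.A s) (hq : q ∈ GX H.L H.A s)
    (hpq : Collin H.L p q)
    (hp1 : perp H.L p ∩ s = {p₁}) (hq1 : perp H.L q ∩ s = {q₁}) :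
    q₁ ∈ perp H.L p₁ := by
  classical
  obtain ⟨hpns, q0, hq0eq, hpolar0, -⟩ := hp
  obtain ⟨hqns, -⟩ := hq
  have hq0 : q0 = p₁ := Set.singleton_eq_singleton_iff.1 (hq0eq.symm.trans hp1)
  rw [hq0] at hpolar0
  have hp₁mem : p₁ ∈ perp H.L p ∩ s := by rw [hp1]; exact rfl
  have hq₁mem : q₁ ∈ perp H.L q ∩ s := by rw [hq1]; exact rfl
  have hp₁s : p₁ ∈ s := hp₁mem.2
  have hq₁s : q₁ ∈ s := hq₁mem.2
  have hcpp₁ : Collin H.L p p₁ := by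
    have h1 : p₁ = p ∨ Collin H.L p p₁ := hp₁mem.1
    rcases h1 with h | h
    · exact absurd (h ▸ hp₁s) hpns
    · exact h
  have hcqq₁ : Collin H.L q q₁ := by
    have h1 : q₁ = q ∨ Collin H.L q q₁ := hq₁mem.1
    rcases h1 with h | h
    · exact absurd (h ▸ hq₁s) hqns
    · exact h
  by_cases hq₁p₁ : q₁ = p₁
  · exact Or.inl hq₁p₁
  by_cases hcp₁q₁ : Collin H.L p₁ q₁
  · exact Or.inr hcp₁q₁
  exfalso
  have hne : p₁ ≠ q₁ := fun h => hq₁p₁ h.symm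
  have hnc' : ¬ Collin H.L q₁ p₁ := fun h => hcp₁q₁ (collin_symm' h)
  have hmemp : ∀ x, Collin H.L p x → x ∈ s → x = p₁ := by
    intro x hx hxs
    have hmem : x ∈ perp H.L p ∩ s := ⟨Or.inr hx, hxs⟩
    rw [hp1] at hmem
    exact Set.mem_singleton_iff.1 hmem
  have hmemq : ∀ x, Collin H.L q x → x ∈ s → x = q₁ := by
    intro x hx hxs
    have hmem : x ∈ perp H.L q ∩ s := ⟨Or.inr hx, hxs⟩
    rw [hq1] at hmem
    exact Set.mem_singleton_iff.1 hmem
  have hpol4 := H.symp_rank4 s hs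
  have hssub : IsSubspace H.L s := H.parapolar.symp_subspace s hs
  -- a thick line through p₁ inside s
  obtain ⟨lst, hlstL, hlsts, hp₁lst, y, hylst, z, hzlst, hyp₁, hzp₁, hyz⟩ :=
    thick_line_of_symp H hs hp₁s
  have hq₁lst : q₁ ∉ lst := fun h => hnc' (collin_of_line' hlstL h hp₁lst (Ne.symm hne))
  obtain ⟨w, hwlst, hcq₁w, huniqq₁⟩ :=
    unique_perp' hpol4 hq₁s hlstL hlsts hq₁lst hp₁lst hnc'
  have hwp₁ : w ≠ p₁ := fun h => hnc' (h ▸ hcq₁w)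
  have hcp₁w : Collin H.L p₁ w := collin_of_line' hlstL hp₁lst hwlst (Ne.symm hwp₁)
  have hws : w ∈ s := hlsts hwlst
  -- a common neighbour of p₁ and q₁ far from w
  obtain ⟨w', hw's, hcp₁w', hcq₁w', hncww', hw'w⟩ :=
    exists_far_perp hpol4 hssub hp₁s hq₁s hws hne hcp₁q₁ hcp₁w hcq₁w
  -- the vertex r of the hexagon
  obtain ⟨r, hrlst, hrp₁, hrw⟩ : ∃ r ∈ lst, r ≠ p₁ ∧ r ≠ w := by
    by_cases hyw : y = w
    · exact ⟨z, hzlst, hzp₁, fun h => hyz (hyw.trans h.symm)⟩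
    · exact ⟨y, hylst, hyp₁, hyw⟩
  have hrs : r ∈ s := hlsts hrlst
  have hcp₁r : Collin H.L p₁ r := collin_of_line' hlstL hp₁lst hrlst (Ne.symm hrp₁)
  have hncq₁r : ¬ Collin H.L q₁ r := fun h => hrw (huniqq₁ r hrlst h)
  have hncrq₁ : ¬ Collin H.L r q₁ := fun h => hncq₁r (collin_symm' h)
  have hrq₁ : r ≠ q₁ := fun h => hq₁lst (h ▸ hrlst)
  -- r is not collinear with w'
  have hw'lst : w' ∉ lst := fun h => hncww' (collin_of_line' hlstL hwlst h (Ne.symm hw'w))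
  have hncw'w : ¬ Collin H.L w' w := fun h => hncww' (collin_symm' h)
  obtain ⟨uw, huwlst, hcw'uw, huniqw'⟩ :=
    unique_perp' hpol4 hw's hlstL hlsts hw'lst hwlst hncw'w
  have hup : p₁ = uw := huniqw' p₁ hp₁lst (collin_symm' hcp₁w')
  have hncw'r : ¬ Collin H.L w' r := fun h => hrp₁ ((huniqw' r hrlst h).trans hup.symm)
  -- the vertex r' of the hexagon
  obtain ⟨hq₁w'_ne, m₅, hm₅L, hq₁m₅, hw'm₅⟩ := hcq₁w'
  have hm₅s : m₅ ⊆ s := line_sub' hssub hm₅L hq₁m₅ hw'm₅ hq₁w'_ne hq₁s hw's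
  have hrm₅ : r ∉ m₅ := by
    intro h
    rcases eq_or_ne r q₁ with h' | h'
    · exact hrq₁ h'
    · exact hncq₁r (collin_of_line' hm₅L hq₁m₅ h (Ne.symm h'))
  obtain ⟨r', hr'm₅, hcrr', huniqr⟩ :=
    unique_perp' hpol4 hrs hm₅L hm₅s hrm₅ hq₁m₅ hncrq₁
  have hr'q₁ : r' ≠ q₁ := fun h => hncrq₁ (h ▸ hcrr')
  have hr'w' : r' ≠ w' := fun h => hncw'r (collin_symm' (h ▸ hcrr'))
  have hcq₁r' : Collin H.L q₁ r' := collin_of_line' hm₅L hq₁m₅ hr'm₅ (Ne.symm hr'q₁)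
  have hr's : r' ∈ s := hm₅s hr'm₅
  have hp₁m₅ : p₁ ∉ m₅ := fun h => hcp₁q₁ (collin_of_line' hm₅L h hq₁m₅ hne)
  obtain ⟨up, hupm₅, hcpup, huniqp₁⟩ :=
    unique_perp' hpol4 hp₁s hm₅L hm₅s hp₁m₅ hq₁m₅ hcp₁q₁
  have hw'up : w' = up := huniqp₁ w' hw'm₅ hcp₁w'
  have hncp₁r' : ¬ Collin H.L p₁ r' := fun h => hr'w' ((huniqp₁ r' hr'm₅ h).trans hw'up.symm)
  have hr'p₁ : r' ≠ p₁ := fun h => hp₁m₅ (h ▸ hr'm₅)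
  -- non-collinearities with p and q
  have hncpr : ¬ Collin H.L p r := fun h => hrp₁ (hmemp r h hrs)
  have hncpq₁ : ¬ Collin H.L p q₁ := fun h => hq₁p₁ (hmemp q₁ h hq₁s)
  have hncpr' : ¬ Collin H.L p r' := fun h => hr'p₁ (hmemp r' h hr's)
  have hncqr : ¬ Collin H.L q r := fun h => hrq₁ (hmemq r h hrs)
  have hncqp₁ : ¬ Collin H.L q p₁ := fun h => hq₁p₁ (hmemq p₁ h hp₁s).symm
  have hncqr' : ¬ Collin H.L q r' := fun h => hr'q₁ (hmemq r' h hr's)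
  -- the polar pair {r, p}
  have hppr : PolarPair H.L p r := hpolar0 r ⟨Or.inr hcp₁r, hrs⟩ hrp₁
  have hpprp : PolarPair H.L r p := by
    obtain ⟨h1, h2⟩ := hppr
    constructor
    · show (collGraph H.L).dist r p = 2
      rw [SimpleGraph.dist_comm]
      exact h1
    · rw [Set.inter_comm]
      exact h2
  -- collinearities around the hexagon
  have hcrp₁ : Collin H.L r p₁ := collin_symm' hcp₁r
  have hcp₁p : Collin H.L p₁ p := collin_symm' hcpp₁
  have hcr'r : Collin H.L r' r := collin_symm' hcrr'
  -- remaining (symmetric) non-collinearities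
  have hn_rp : ¬ Collin H.L r p := fun h => hncpr (collin_symm' h)
  have hn_rq : ¬ Collin H.L r q := fun h => hncqr (collin_symm' h)
  have hn_p₁q : ¬ Collin H.L p₁ q := fun h => hncqp₁ (collin_symm' h)
  have hn_r'p₁ : ¬ Collin H.L r' p₁ := fun h => hncp₁r' (collin_symm' h)
  have hn_q₁p : ¬ Collin H.L q₁ p := fun h => hncpq₁ (collin_symm' h)
  have hn_r'p : ¬ Collin H.L r' p := fun h => hncpr' (collin_symm' h)
  have hn_r'q : ¬ Collin H.L r' q := fun h => hncqr' (collin_symm' h)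
  -- distinctness of the six vertices
  have hne_rp : r ≠ p := fun h => hpns (h ▸ hrs)
  have hne_rq : r ≠ q := fun h => hqns (h ▸ hrs)
  have hne_rr' : r ≠ r' := hcrr'.1
  have hne_p₁p : p₁ ≠ p := fun h => hpns (h ▸ hp₁s)
  have hne_p₁q : p₁ ≠ q := fun h => hqns (h ▸ hp₁s)
  have hne_p₁r' : p₁ ≠ r' := Ne.symm hr'p₁
  have hne_pq : p ≠ q := hpq.1
  have hne_pq₁ : p ≠ q₁ := fun h => hpns (by rw [h]; exact hq₁s)
  have hne_pr' : p ≠ r' := fun h => hpns (by rw [h]; exact hr's)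
  have hne_qq₁ : q ≠ q₁ := fun h => hqns (by rw [h]; exact hq₁s)
  have hne_qr' : q ≠ r' := fun h => hqns (by rw [h]; exact hr's)
  have hne_q₁r' : q₁ ≠ r' := Ne.symm hr'q₁
  -- build the hexagon and apply the weak hexagon axiom
  have hinj : Function.Injective (hexFun r p₁ p q q₁ r') := by
    intro i j hij
    fin_cases i <;> fin_cases j <;>
      first
      | rfl
      | exact absurd hij (by assumption)
      | exact absurd hij.symm (by assumption)
  have hedge : ∀ i : Fin 6,
      Collin H.L (hexFun r p₁ p q q₁ r' i) (hexFun r p₁ p q q₁ r' (i + 1)) := by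
    intro i
    fin_cases i
    · exact hcrp₁
    · exact hcp₁p
    · exact hpq
    · exact hcqq₁
    · exact hcq₁r'
    · exact hcr'r
  have hnon : ∀ i j : Fin 6, j ≠ i → j ≠ i + 1 → j ≠ i - 1 →
      ¬ Collin H.L (hexFun r p₁ p q q₁ r' i) (hexFun r p₁ p q q₁ r' j) := by
    intro i j h1 h2 h3
    fin_cases i <;> fin_cases j <;>
      first
      | exact absurd rfl h1
      | exact absurd rfl h2
      | exact absurd rfl h3
      | assumption
  obtain ⟨wv, hwv0, hwv2, hwv4⟩ := hWHA (hexFun r p₁ p q q₁ r') hinj hedge hnon hpprp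
  have h0' : wv = r ∨ Collin H.L r wv := hwv0
  have h2' : wv = p ∨ Collin H.L p wv := hwv2
  have h4' : wv = q₁ ∨ Collin H.L q₁ wv := hwv4
  rcases h2' with rfl | hcpwv
  · -- wv = p
    rcases h4' with h | h
    · exact hpns (by rw [h]; exact hq₁s)
    · exact hq₁p₁ (hmemp q₁ (collin_symm' h) hq₁s)
  · by_cases hwvs : wv ∈ s
    · have hwvp₁ : wv = p₁ := hmemp wv hcpwv hwvs
      rcases h4' with h | h
      · exact hne (hwvp₁.symm.trans h)
      · rw [hwvp₁] at h
        exact hnc' h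
    · have hcq₁wv : Collin H.L q₁ wv := by
        rcases h4' with rfl | h
        · exact absurd hq₁s hwvs
        · exact h
      have hcrwv : Collin H.L r wv := by
        rcases h0' with rfl | h
        · exact absurd hrs hwvs
        · exact h
      have hgd : gdist H.L q₁ r = 2 := by
        show (collGraph H.L).dist q₁ r = 2
        have hle : (collGraph H.L).dist q₁ r ≤ 2 := by
          have hwalk := SimpleGraph.dist_le
            (SimpleGraph.Walk.cons (show (collGraph H.L).Adj q₁ r' from hcq₁r')
              (SimpleGraph.Walk.cons (show (collGraph H.L).Adj r' r from hcr'r)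
                SimpleGraph.Walk.nil))
          simpa using hwalk
        have h0 : (collGraph H.L).dist q₁ r ≠ 0 := by
          rw [ne_eq, SimpleGraph.dist_eq_zero_iff_eq_or_not_reachable]
          push_neg
          refine ⟨Ne.symm hrq₁, ?_⟩
          exact ⟨SimpleGraph.Walk.cons (show (collGraph H.L).Adj q₁ r' from hcq₁r')
            (SimpleGraph.Walk.cons (show (collGraph H.L).Adj r' r from hcr'r)
              SimpleGraph.Walk.nil)⟩
        have h1 : (collGraph H.L).dist q₁ r ≠ 1 := fun h =>
          hncq₁r (SimpleGraph.dist_eq_one_iff_adj.1 h)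
        omega
      exact hwvs (H.parapolar.symp_convex s hs q₁ hq₁s r hrs hgd wv hcq₁wv hcrwv)
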